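/- Suppose there exists a reconciliation map μ from (T;t,σ) to S. Then there exists a time-consistent reconciliation map from (T;t,σ) to S if and only if the auxiliary directed graph A₂, with vertex set V(S) ∪ V(T) and edges given by rules (A1), (A2), (A3), (A4), is acyclic. -/

import Mathlib

/-- A rooted tree on vertex type `V`, encoded by a parent map.
Edges are directed away from the root; the edge into a non-root vertex `v`
is `(par v, v)`. -/
structure RTree (V : Type*) where
  root : V
  par : V → V
  par_root : par root = root
  par_ne : ∀ v, v ≠ root → par v ≠ v
  reaches : ∀ v, ∃ k, par^[k] v = root

namespace RTree

variable {V : Type*}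

/-- `anc T x y` : `x` is a descendant of `y`, i.e. `x ⪯_T y`. -/
def anc (T : RTree V) (x y : V) : Prop := ∃ k, (T.par)^[k] x = y

/-- strict descendant: `x ≺_T y`. -/
def sanc (T : RTree V) (x y : V) : Prop := T.anc x y ∧ x ≠ y

def IsLeaf (T : RTree V) (v : V) : Prop := ∀ u, T.par u = v → u = v

/-- `x` is a least common ancestor of the set `A`. -/
def IsLca (T : RTree V) (A : Set V) (x : V) : Prop :=
  (∀ a ∈ A, T.anc a x) ∧ ∀ y, (∀ a ∈ A, T.anc a y) → T.anc x y

/-- A time map: strict descendants have strictly larger time stamps. -/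
def IsTimeMap (T : RTree V) (τ : V → ℝ) : Prop :=
  ∀ x y, T.sanc x y → τ y < τ x

end RTree

/-- Event labels: speciation `•`, duplication `□`, HGT `△`, leaf `⊙`. -/
inductive Event where
  | spec | dup | hgt | leaf
deriving DecidableEq

/-- The common setup: a gene tree `T` (vertices `V`) with event labels `t`,
transfer edges `trans` (an edge is recorded by its child endpoint),
a species tree `S` (vertices `W`), the map `sig = σ` assigning to each gene
(leaf of `T`) the species (leaf of `S`) it resides in, and a least common
ancestor function `lca` on the species tree. -/
structure ReconSetup (V W : Type*) where
  T : RTree V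
  S : RTree W
  t : V → Event
  trans : Set V
  sig : V → W
  lca : Set W → W
  trans_ne_root : ∀ v ∈ trans, v ≠ T.root
  trans_hgt : ∀ v ∈ trans, t (T.par v) = Event.hgt
  leaf_iff : ∀ v, T.IsLeaf v ↔ t v = Event.leaf
  sig_leaf : ∀ v, T.IsLeaf v → S.IsLeaf (sig v)
  lca_spec : ∀ A : Set W, A.Nonempty → S.IsLca A (lca A)

/-- lower endpoint of a vertex-or-edge of the species tree
(an edge `(S.par y, y)` is encoded as `Sum.inr y`; a vertex `x` as `Sum.inl x`). -/
def lowPt {W : Type*} : W ⊕ W → W := Sum.elim id id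

namespace ReconSetup

variable {V W : Type*}

/-- ancestor order of the forest `T_{E̅}` obtained by deleting transfer edges. -/
def fanc (R : ReconSetup V W) (x y : V) : Prop :=
  ∃ k, (R.T.par)^[k] x = y ∧ ∀ i < k, (R.T.par)^[i] x ∉ R.trans

def sfanc (R : ReconSetup V W) (x y : V) : Prop := R.fanc x y ∧ x ≠ y

/-- `σ_{T̅}(u)`: the species of the leaves of `T` below `u` in the forest `T_{E̅}`. -/
def sigmaBar (R : ReconSetup V W) (u : V) : Set W :=
  R.sig '' {l | R.T.IsLeaf l ∧ R.fanc l u}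

/-- Ancestor order of `S` extended to vertices and edges:
`z ⪯ (x,y) ↔ z ⪯ y`, `(x,y) ⪯ z ↔ x ⪯ z`, `(x,y) ⪯ (a,b) ↔ y ⪯ b`. -/
def extLE (R : ReconSetup V W) : W ⊕ W → W ⊕ W → Prop
  | Sum.inl a, Sum.inl b => R.S.anc a b
  | Sum.inl a, Sum.inr y => R.S.anc a y
  | Sum.inr y, Sum.inl b => R.S.anc (R.S.par y) b
  | Sum.inr y, Sum.inr z => R.S.anc y z

def extLT (R : ReconSetup V W) (p q : W ⊕ W) : Prop := R.extLE p q ∧ ¬ R.extLE q p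

def incomp (R : ReconSetup V W) (p q : W ⊕ W) : Prop := ¬ R.extLE p q ∧ ¬ R.extLE q p

def IsDupHGT (R : ReconSetup V W) (u : V) : Prop :=
  R.t u = Event.dup ∨ R.t u = Event.hgt

/-- (M1) leaf constraint. -/
def M1 (R : ReconSetup V W) (μ : V → W ⊕ W) : Prop :=
  ∀ u, R.T.IsLeaf u → μ u = Sum.inl (R.sig u)

/-- (M2i) speciation vertices map to the lca of the species below them. -/
def M2i (R : ReconSetup V W) (μ : V → W ⊕ W) : Prop :=
  ∀ u, R.t u = Event.spec → μ u = Sum.inl (R.lca (R.sigmaBar u))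

/-- (M2ii) duplication/HGT vertices map to edges of `S`. -/
def M2ii (R : ReconSetup V W) (μ : V → W ⊕ W) : Prop :=
  ∀ u, R.IsDupHGT u → ∃ y, y ≠ R.S.root ∧ μ u = Sum.inr y

/-- (M2iii) the endpoints of a transfer edge receive incomparable images. -/
def M2iii (R : ReconSetup V W) (μ : V → W ⊕ W) : Prop :=
  ∀ v ∈ R.trans, R.incomp (μ (R.T.par v)) (μ v)

/-- (M3) ancestor constraint within components of `T_{E̅}`. -/
def M3 (R : ReconSetup V W) (μ : V → W ⊕ W) : Prop :=
  ∀ v w, R.sfanc v w →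
    ((R.IsDupHGT v ∧ R.IsDupHGT w) → R.extLE (μ v) (μ w)) ∧
    (¬ (R.IsDupHGT v ∧ R.IsDupHGT w) → R.extLT (μ v) (μ w))

/-- `μ` is a reconciliation map from `(T;t,σ)` to `S`. -/
def IsRecon (R : ReconSetup V W) (μ : V → W ⊕ W) : Prop :=
  R.M1 μ ∧ R.M2i μ ∧ R.M2ii μ ∧ R.M2iii μ ∧ R.M3 μ

/-- (O1) every internal vertex has at least two children. -/
def O1 (R : ReconSetup V W) : Prop :=
  ∀ v, ¬ R.T.IsLeaf v →
    ∃ a b, a ≠ b ∧ R.T.par a = v ∧ R.T.par b = v ∧ a ≠ v ∧ b ≠ v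

/-- (O2) every HGT vertex has a transfer child edge and a non-transfer child edge. -/
def O2 (R : ReconSetup V W) : Prop :=
  ∀ v, R.t v = Event.hgt →
    (∃ c, R.T.par c = v ∧ c ∈ R.trans) ∧ (∃ c, R.T.par c = v ∧ c ≠ v ∧ c ∉ R.trans)

/-- (Σ1) a speciation vertex has two children whose species sets are disjoint. -/
def Sigma1 (R : ReconSetup V W) : Prop :=
  ∀ x, R.t x = Event.spec →
    ∃ v w, v ≠ w ∧ R.T.par v = x ∧ R.T.par w = x ∧ v ≠ x ∧ w ≠ x ∧
      R.sigmaBar v ∩ R.sigmaBar w = ∅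

/-- (Σ2) the species sets across a transfer edge are disjoint. -/
def Sigma2 (R : ReconSetup V W) : Prop :=
  ∀ w ∈ R.trans, R.sigmaBar (R.T.par w) ∩ R.sigmaBar w = ∅

/-- the gene tree is binary. -/
def BinaryT (R : ReconSetup V W) : Prop :=
  ∀ v, ¬ R.T.IsLeaf v →
    ∃ a b, a ≠ b ∧ ∀ c, (R.T.par c = v ∧ c ≠ v) ↔ (c = a ∨ c = b)

/-- the species tree is binary. -/
def BinaryS (R : ReconSetup V W) : Prop :=
  ∀ v, ¬ R.S.IsLeaf v →
    ∃ a b, a ≠ b ∧ ∀ c, (R.S.par c = v ∧ c ≠ v) ↔ (c = a ∨ c = b)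

/-- (C1) speciation vertices and leaves get the same time as their image. -/
def C1 (R : ReconSetup V W) (μ : V → W ⊕ W) (τT : V → ℝ) (τS : W → ℝ) : Prop :=
  ∀ u x, (R.t u = Event.spec ∨ R.t u = Event.leaf) → μ u = Sum.inl x → τT u = τS x

/-- (C2) a vertex mapped into an edge `(x,y)` gets a time strictly between
the times of `x` and `y`. -/
def C2 (R : ReconSetup V W) (μ : V → W ⊕ W) (τT : V → ℝ) (τS : W → ℝ) : Prop :=
  ∀ u y, R.IsDupHGT u → μ u = Sum.inr y → τS (R.S.par y) < τT u ∧ τT u < τS y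

/-- `μ` is a time-consistent reconciliation map. -/
def TimeConsistent (R : ReconSetup V W) (μ : V → W ⊕ W) : Prop :=
  ∃ τT τS, R.T.IsTimeMap τT ∧ R.S.IsTimeMap τS ∧ R.C1 μ τT τS ∧ R.C2 μ τT τS

/-- (D1). -/
def D1 (R : ReconSetup V W) (μ : V → W ⊕ W) (τT : V → ℝ) (τS : W → ℝ) : Prop :=
  ∀ u x, μ u = Sum.inl x → τT u = τS x

/-- (D2). -/
def D2 (R : ReconSetup V W) (τT : V → ℝ) (τS : W → ℝ) : Prop :=
  ∀ u x, R.IsDupHGT u → R.S.anc x (R.lca (R.sigmaBar u)) → τT u < τS x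

/-- (D3), for a transfer edge `(T.par v, v)` with `v ∈ trans`. -/
def D3 (R : ReconSetup V W) (τT : V → ℝ) (τS : W → ℝ) : Prop :=
  ∀ v x, v ∈ R.trans →
    R.S.anc (R.lca (R.sigmaBar (R.T.par v) ∪ R.sigmaBar v)) x → τS x < τT (R.T.par v)

/-- The DTL-scenario axioms (I)-(IV) for a map `γ : V(T) → V(S)`. -/
def DTL (R : ReconSetup V W) (γ : V → W) : Prop :=
  (∀ u, R.T.IsLeaf u → γ u = R.sig u) ∧
  (∀ u v w, v ≠ w → R.T.par v = u → R.T.par w = u → v ≠ u → w ≠ u →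
    ((¬ R.S.sanc (γ u) (γ v) ∧ ¬ R.S.sanc (γ u) (γ w)) ∧
     (R.S.anc (γ v) (γ u) ∨ R.S.anc (γ w) (γ u)))) ∧
  (∀ v, v ≠ R.T.root →
    (v ∈ R.trans ↔ (¬ R.S.anc (γ (R.T.par v)) (γ v) ∧ ¬ R.S.anc (γ v) (γ (R.T.par v))))) ∧
  (∀ u v w, v ≠ w → R.T.par v = u → R.T.par w = u → v ≠ u → w ≠ u →
    ((R.t u = Event.hgt ↔ (v ∈ R.trans ∨ w ∈ R.trans)) ∧
     (R.t u = Event.spec →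
       γ u = R.lca {γ v, γ w} ∧ ¬ R.S.anc (γ v) (γ w) ∧ ¬ R.S.anc (γ w) (γ v)) ∧
     (R.t u = Event.dup → R.S.anc (R.lca {γ v, γ w}) (γ u))))

end ReconSetup

/-- A directed graph (relation) is acyclic: no edge closes a directed cycle. -/
def Acyclic {α : Type*} (r : α → α → Prop) : Prop :=
  ∀ x y, r x y → ¬ Relation.ReflTransGen r y x

/-- The vertex of the auxiliary graph corresponding to a gene-tree vertex:
speciation vertices and leaves are identified with their image in `S`. -/
def toA {V W : Type*} (R : ReconSetup V W) (μ : V → W ⊕ W) (u : V) : V ⊕ W :=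
  if R.t u = Event.spec ∨ R.t u = Event.leaf then Sum.inr (lowPt (μ u)) else Sum.inl u

/-- The auxiliary graph `A₂` with edges (A1), (A2), (A3), (A4). -/
inductive A2rel {V W : Type*} (R : ReconSetup V W) (μ : V → W ⊕ W) :
    V ⊕ W → V ⊕ W → Prop
  | a1 (v : V) (hv : v ≠ R.T.root) :
      A2rel R μ (toA R μ (R.T.par v)) (toA R μ v)
  | a2 (y : W) (hy : y ≠ R.S.root) :
      A2rel R μ (Sum.inr (R.S.par y)) (Sum.inr y)
  | a3 (u : V) (h : R.IsDupHGT u) :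
      A2rel R μ (Sum.inl u) (Sum.inr (R.lca (R.sigmaBar u)))
  | a4 (v : V) (hv : v ∈ R.trans) :
      A2rel R μ (Sum.inr (R.lca (R.sigmaBar (R.T.par v) ∪ R.sigmaBar v)))
                 (Sum.inl (R.T.par v))

section AuxTree

namespace RTree

variable {V : Type*} (T : RTree V)

lemma anc_refl (x : V) : T.anc x x := ⟨0, rfl⟩

lemma anc_trans {x y z : V} (h1 : T.anc x y) (h2 : T.anc y z) : T.anc x z := by
  obtain ⟨i, hi⟩ := h1; obtain ⟨j, hj⟩ := h2
  exact ⟨j + i, by rw [Function.iterate_add_apply, hi, hj]⟩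

lemma anc_par (x : V) : T.anc x (T.par x) := ⟨1, by simp⟩

lemma anc_root_all (x : V) : T.anc x T.root := T.reaches x

lemma eq_root_of_root_anc {x : V} (h : T.anc T.root x) : x = T.root := by
  obtain ⟨k, hk⟩ := h
  rw [Function.iterate_fixed T.par_root] at hk
  exact hk.symm

open Classical in
noncomputable def dep (x : V) : ℕ := Nat.find (T.reaches x)

lemma dep_spec (x : V) : T.par^[T.dep x] x = T.root := by
  classical
  exact Nat.find_spec (T.reaches x)

lemma dep_le {x : V} {k : ℕ} (h : T.par^[k] x = T.root) : T.dep x ≤ k := by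
  classical
  exact Nat.find_le h

lemma dep_pos {x : V} (hx : x ≠ T.root) : 0 < T.dep x := by
  rcases Nat.eq_zero_or_pos (T.dep x) with h | h
  · have h2 := T.dep_spec x; rw [h] at h2; exact absurd h2 hx
  · exact h

lemma dep_succ {x : V} (hx : x ≠ T.root) : T.dep x = T.dep (T.par x) + 1 := by
  have h1 : T.dep x ≤ T.dep (T.par x) + 1 :=
    T.dep_le (by rw [Function.iterate_succ_apply]; exact T.dep_spec (T.par x))
  have hp := T.dep_pos hx
  have h2 : T.dep (T.par x) ≤ T.dep x - 1 := by
    apply T.dep_le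
    have he : T.dep x - 1 + 1 = T.dep x := by omega
    rw [← Function.iterate_succ_apply, Nat.succ_eq_add_one, he]
    exact T.dep_spec x
  omega

lemma dep_par_le (x : V) : T.dep (T.par x) ≤ T.dep x := by
  by_cases hx : x = T.root
  · rw [hx, T.par_root]
  · rw [T.dep_succ hx]; omega

lemma dep_anc_le {x y : V} (h : T.anc x y) : T.dep y ≤ T.dep x := by
  have H : ∀ k (x : V), T.dep (T.par^[k] x) ≤ T.dep x := by
    intro k
    induction k with
    | zero => intro x; simp
    | succ k ih =>
      intro x
      rw [Function.iterate_succ_apply]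
      exact le_trans (ih _) (T.dep_par_le x)
  obtain ⟨k, hk⟩ := h
  exact hk ▸ H k x

lemma anc_antisymm {x y : V} (h1 : T.anc x y) (h2 : T.anc y x) : x = y := by
  by_contra hne
  have hxr : x ≠ T.root := by
    intro hx
    subst hx
    exact hne (T.eq_root_of_root_anc h1).symm
  obtain ⟨i, hi⟩ := h1
  have hi0 : i ≠ 0 := by rintro rfl; exact hne hi
  have he : i - 1 + 1 = i := by omega
  have hpar : T.anc (T.par x) y :=
    ⟨i - 1, by rw [← Function.iterate_succ_apply, Nat.succ_eq_add_one, he]; exact hi⟩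
  have h3 : T.dep y ≤ T.dep (T.par x) := T.dep_anc_le hpar
  have h4 : T.dep x ≤ T.dep y := T.dep_anc_le h2
  have h5 := T.dep_succ hxr
  omega

lemma anc_par_of_sanc {x y : V} (h : T.anc x y) (hxy : x ≠ y) : T.anc (T.par x) y := by
  obtain ⟨i, hi⟩ := h
  have hi0 : i ≠ 0 := by rintro rfl; exact hxy hi
  have he : i - 1 + 1 = i := by omega
  exact ⟨i - 1, by rw [← Function.iterate_succ_apply, Nat.succ_eq_add_one, he]; exact hi⟩

lemma anc_comparable {a y z : V} (h1 : T.anc a y) (h2 : T.anc a z) :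
    T.anc y z ∨ T.anc z y := by
  obtain ⟨i, hi⟩ := h1; obtain ⟨j, hj⟩ := h2
  rcases le_total i j with h | h
  · left
    exact ⟨j - i, by rw [← hi, ← Function.iterate_add_apply, Nat.sub_add_cancel h]; exact hj⟩
  · right
    exact ⟨i - j, by rw [← hj, ← Function.iterate_add_apply, Nat.sub_add_cancel h]; exact hi⟩

lemma dep_lt_card [Fintype V] (x : V) : T.dep x < Fintype.card V := by
  have key : ∀ i j : ℕ, i < j → j ≤ T.dep x → T.par^[i] x ≠ T.par^[j] x := by
    intro i j hij hj heq
    have h1 : T.par^[T.dep x - j + j] x = T.root := by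
      rw [Nat.sub_add_cancel hj]; exact T.dep_spec x
    rw [Function.iterate_add_apply, ← heq, ← Function.iterate_add_apply] at h1
    have := T.dep_le h1
    omega
  have hinj : Function.Injective (fun i : Fin (T.dep x + 1) => T.par^[i.1] x) := by
    intro i j hij
    rcases lt_trichotomy i.1 j.1 with h | h | h
    · exact absurd hij (key i.1 j.1 h (by omega))
    · exact Fin.ext h
    · exact absurd hij.symm (key j.1 i.1 h (by omega))
  have := Fintype.card_le_of_injective _ hinj
  simpa using this

lemma chain_lt {f : V → ℝ} (h : ∀ v, v ≠ T.root → f (T.par v) < f v) :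
    ∀ k x, (∀ j, j ≤ k → T.par^[j] x ≠ T.root) → f (T.par^[k+1] x) < f x := by
  intro k
  induction k with
  | zero =>
    intro x hx
    simpa using h x (by simpa using hx 0 le_rfl)
  | succ k ih =>
    intro x hx
    have h1 : f (T.par x) < f x := h x (by simpa using hx 0 (by omega))
    have h2 : f (T.par^[k+1] (T.par x)) < f (T.par x) := by
      apply ih
      intro j hj
      rw [← Function.iterate_succ_apply]
      exact hx (j+1) (by omega)
    calc f (T.par^[k+1+1] x) = f (T.par^[k+1] (T.par x)) := by
          rw [Function.iterate_succ_apply]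
      _ < f (T.par x) := h2
      _ < f x := h1

lemma isTimeMap_of_edge {f : V → ℝ} (h : ∀ v, v ≠ T.root → f (T.par v) < f v) :
    T.IsTimeMap f := by
  rintro x y ⟨⟨i, hi⟩, hxy⟩
  classical
  have hex : ∃ k, T.par^[k] x = y := ⟨i, hi⟩
  have hks : T.par^[Nat.find hex] x = y := Nat.find_spec hex
  set k := Nat.find hex with hkdef
  have hk0 : k ≠ 0 := by
    intro h0
    rw [h0] at hks
    simp only [Function.iterate_zero_apply] at hks
    exact hxy hks
  have hnr : ∀ j, j < k → T.par^[j] x ≠ T.root := by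
    intro j hj hroot
    have hy : T.par^[k] x = T.root := by
      have h2 : T.par^[k - j + j] x = T.par^[k-j] (T.par^[j] x) := Function.iterate_add_apply _ _ _ _
      rw [Nat.sub_add_cancel hj.le, hroot, Function.iterate_fixed T.par_root] at h2
      exact h2
    exact Nat.find_min hex hj (by rw [hroot, ← hy, hks])
  have hch := T.chain_lt h (k-1) x (fun j hj => hnr j (by omega))
  have he : k - 1 + 1 = k := by omega
  rw [he, hks] at hch
  exact hch

end RTree

end AuxTree
section AuxRecon

namespace ReconSetup

variable {V W : Type*} (R : ReconSetup V W)

lemma fanc_refl (u : V) : R.fanc u u := ⟨0, rfl, fun i hi => absurd hi (Nat.not_lt_zero i)⟩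

lemma fanc_step {l v : V} (h : R.fanc l v) (hv : v ∉ R.trans) : R.fanc l (R.T.par v) := by
  obtain ⟨k, hk, hmem⟩ := h
  refine ⟨k+1, ?_, ?_⟩
  · rw [Function.iterate_succ_apply', hk]
  · intro i hi
    rcases Nat.lt_or_ge i k with h' | h'
    · exact hmem i h'
    · have hik : i = k := by omega
      subst hik
      rw [hk]
      exact hv

lemma fanc_leaf_eq {l v : V} (h : R.fanc l v) (hv : R.T.IsLeaf v) : l = v := by
  obtain ⟨k, hk, -⟩ := h
  have H : ∀ k (l : V), R.T.par^[k] l = v → l = v := by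
    intro k
    induction k with
    | zero => intro l h; exact h
    | succ k ih =>
      intro l h
      rw [Function.iterate_succ_apply'] at h
      exact ih l (hv _ h)
  exact H k l hk

lemma mem_sigmaBar {l u : V} (hl : R.T.IsLeaf l) (hf : R.fanc l u) :
    R.sig l ∈ R.sigmaBar u := ⟨l, ⟨hl, hf⟩, rfl⟩

lemma leaf_below [Fintype V] (hO1 : R.O1) (hO2 : R.O2) (u : V) :
    ∃ l, R.T.IsLeaf l ∧ R.fanc l u := by
  suffices H : ∀ n (v : V), Fintype.card V - R.T.dep v ≤ n → ∃ l, R.T.IsLeaf l ∧ R.fanc l v from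
    H (Fintype.card V) u (by omega)
  intro n
  induction n with
  | zero =>
    intro v hv
    have := R.T.dep_lt_card v
    omega
  | succ n ih =>
    intro v hv
    by_cases hleaf : R.T.IsLeaf v
    · exact ⟨v, hleaf, R.fanc_refl v⟩
    · obtain ⟨c, hpc, hcv, hct⟩ : ∃ c, R.T.par c = v ∧ c ≠ v ∧ c ∉ R.trans := by
        by_cases hh : R.t v = Event.hgt
        · obtain ⟨-, c, h1, h2, h3⟩ := hO2 v hh
          exact ⟨c, h1, h2, h3⟩
        · obtain ⟨a, b, hab, ha, hb, hav, hbv⟩ := hO1 v hleaf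
          refine ⟨a, ha, hav, fun htr => hh ?_⟩
          have := R.trans_hgt a htr
          rwa [ha] at this
      have hcroot : c ≠ R.T.root := by
        intro h
        apply hcv
        rw [h, R.T.par_root] at hpc
        rw [h, hpc]
      have hdep : R.T.dep c = R.T.dep v + 1 := by
        have := R.T.dep_succ hcroot
        rw [hpc] at this
        omega
      obtain ⟨l, hl, hfl⟩ := ih c (by have := R.T.dep_lt_card c; omega)
      refine ⟨l, hl, ?_⟩
      have := R.fanc_step hfl hct
      rwa [hpc] at this

lemma sigmaBar_nonempty [Fintype V] (hO1 : R.O1) (hO2 : R.O2) (u : V) :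
    (R.sigmaBar u).Nonempty := by
  obtain ⟨l, h1, h2⟩ := R.leaf_below hO1 hO2 u
  exact ⟨_, R.mem_sigmaBar h1 h2⟩

lemma sigmaBar_subset {v : V} (hv : v ∉ R.trans) :
    R.sigmaBar v ⊆ R.sigmaBar (R.T.par v) := by
  rintro a ⟨l, ⟨hl, hf⟩, rfl⟩
  exact ⟨l, ⟨hl, R.fanc_step hf hv⟩, rfl⟩

lemma sigmaBar_leaf {v : V} (hv : R.T.IsLeaf v) : R.sigmaBar v = {R.sig v} := by
  ext a
  constructor
  · rintro ⟨l, ⟨hl, hf⟩, rfl⟩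
    rw [R.fanc_leaf_eq hf hv]
    rfl
  · rintro rfl
    exact R.mem_sigmaBar hv (R.fanc_refl v)

lemma anc_lca {A : Set W} (hA : A.Nonempty) {a : W} (ha : a ∈ A) :
    R.S.anc a (R.lca A) := (R.lca_spec A hA).1 a ha

lemma lca_min {A : Set W} (hA : A.Nonempty) {y : W} (hy : ∀ a ∈ A, R.S.anc a y) :
    R.S.anc (R.lca A) y := (R.lca_spec A hA).2 y hy

lemma extLE_refl (p : W ⊕ W) : R.extLE p p := by
  cases p with
  | inl a => exact R.S.anc_refl a
  | inr y => exact R.S.anc_refl y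

lemma extLE_trans {p q r : W ⊕ W} (h1 : R.extLE p q) (h2 : R.extLE q r) : R.extLE p r := by
  cases p with
  | inl a =>
    cases q with
    | inl b =>
      cases r with
      | inl c => exact R.S.anc_trans h1 h2
      | inr z => exact R.S.anc_trans h1 h2
    | inr y =>
      cases r with
      | inl c => exact R.S.anc_trans h1 (R.S.anc_trans (R.S.anc_par y) h2)
      | inr z => exact R.S.anc_trans h1 h2
  | inr y =>
    cases q with
    | inl b =>
      cases r with
      | inl c => exact R.S.anc_trans h1 h2
      | inr z => exact R.S.anc_trans (R.S.anc_par y) (R.S.anc_trans h1 h2)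
    | inr w =>
      cases r with
      | inl c =>
        by_cases hyw : y = w
        · subst hyw; exact h2
        · exact R.S.anc_trans (R.S.anc_par_of_sanc h1 hyw)
            (R.S.anc_trans (R.S.anc_par w) h2)
      | inr z => exact R.S.anc_trans h1 h2

lemma extLT_of_lt_le {p q r : W ⊕ W} (h1 : R.extLT p q) (h2 : R.extLE q r) : R.extLT p r :=
  ⟨R.extLE_trans h1.1 h2, fun h => h1.2 (R.extLE_trans h2 h)⟩

lemma extLT_of_le_lt {p q r : W ⊕ W} (h1 : R.extLE p q) (h2 : R.extLT q r) : R.extLT p r :=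
  ⟨R.extLE_trans h1 h2.1, fun h => h2.2 (R.extLE_trans h h1)⟩

lemma not_dup_of_leaf {u : V} (h : R.t u = Event.leaf) : ¬ R.IsDupHGT u := by
  rintro (h' | h') <;> rw [h] at h' <;> exact Event.noConfusion h'

lemma not_dup_of_spec {u : V} (h : R.t u = Event.spec) : ¬ R.IsDupHGT u := by
  rintro (h' | h') <;> rw [h] at h' <;> exact Event.noConfusion h'

lemma spec_or_leaf {u : V} (h : ¬ R.IsDupHGT u) :
    R.t u = Event.spec ∨ R.t u = Event.leaf := by
  cases hu : R.t u with
  | spec => exact Or.inl rfl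
  | dup => exact absurd (Or.inl hu) h
  | hgt => exact absurd (Or.inr hu) h
  | leaf => exact Or.inr rfl

lemma mu_spec {ν : V → W ⊕ W} (hrec : R.IsRecon ν) {u : V} (h : R.t u = Event.spec) :
    ν u = Sum.inl (R.lca (R.sigmaBar u)) := hrec.2.1 u h

lemma mu_leaf {ν : V → W ⊕ W} (hrec : R.IsRecon ν) {u : V} (h : R.t u = Event.leaf) :
    ν u = Sum.inl (R.sig u) := hrec.1 u ((R.leaf_iff u).mpr h)

/-- Lemma 1: the image of `u` lies above `lca(σ̄(u))`. -/
lemma recon_above [Fintype V] {ν : V → W ⊕ W} (hrec : R.IsRecon ν)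
    (hO1 : R.O1) (hO2 : R.O2) (u : V) :
    R.extLE (Sum.inl (R.lca (R.sigmaBar u))) (ν u) := by
  have hne := R.sigmaBar_nonempty hO1 hO2 u
  have key : ∀ a ∈ R.sigmaBar u, R.extLE (Sum.inl a) (ν u) := by
    rintro a ⟨l, ⟨hl, hf⟩, rfl⟩
    by_cases hlu : l = u
    · subst hlu
      rw [hrec.1 l hl]
      exact R.S.anc_refl _
    · have hnb : ¬ (R.IsDupHGT l ∧ R.IsDupHGT u) := by
        rintro ⟨h1, -⟩
        exact R.not_dup_of_leaf ((R.leaf_iff l).mp hl) h1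
      have hlt := (hrec.2.2.2.2 l u ⟨hf, hlu⟩).2 hnb
      have := hlt.1
      rwa [hrec.1 l hl] at this
  cases hν : ν u with
  | inl x =>
    refine R.lca_min hne ?_
    intro a ha
    have := key a ha
    rwa [hν] at this
  | inr y =>
    refine R.lca_min hne ?_
    intro a ha
    have := key a ha
    rwa [hν] at this

lemma toA_spec {μ : V → W ⊕ W} (hrec : R.IsRecon μ) {u : V} (h : R.t u = Event.spec) :
    toA R μ u = Sum.inr (R.lca (R.sigmaBar u)) := by
  rw [toA, if_pos (Or.inl h), R.mu_spec hrec h]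
  rfl

lemma toA_leaf {μ : V → W ⊕ W} (hrec : R.IsRecon μ) {u : V} (h : R.t u = Event.leaf) :
    toA R μ u = Sum.inr (R.sig u) := by
  rw [toA, if_pos (Or.inr h), R.mu_leaf hrec h]
  rfl

lemma toA_dup {μ : V → W ⊕ W} {u : V} (h : R.IsDupHGT u) :
    toA R μ u = Sum.inl u := by
  rw [toA, if_neg]
  rintro (h' | h') <;> rcases h with h | h <;> rw [h] at h' <;> exact Event.noConfusion h'

/-- no non-root vertex of `T` is mapped onto the root of `S` by a reconciliation. -/
lemma ne_inl_root {ν : V → W ⊕ W} (hrec : R.IsRecon ν) {v : V} (hv : v ≠ R.T.root) :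
    ν v ≠ Sum.inl R.S.root := by
  intro hμv
  obtain ⟨hM1, hM2i, hM2ii, hM2iii, hM3⟩ := hrec
  by_cases htr : v ∈ R.trans
  · have hinc := hM2iii v htr
    apply hinc.1
    rw [hμv]
    cases hw : ν (R.T.par v) with
    | inl x => exact R.S.anc_root_all x
    | inr y => exact R.S.anc_root_all (R.S.par y)
  · have hsf : R.sfanc v (R.T.par v) := by
      refine ⟨⟨1, by simp, ?_⟩, fun h => R.T.par_ne v hv h.symm⟩
      intro i hi
      have : i = 0 := by omega
      subst this
      exact htr
    have hnb : ¬ (R.IsDupHGT v ∧ R.IsDupHGT (R.T.par v)) := by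
      rintro ⟨h1, -⟩
      obtain ⟨y, hy, hvy⟩ := hM2ii v h1
      rw [hμv] at hvy
      exact Sum.inl_ne_inr hvy
    have hlt := (hM3 v (R.T.par v) hsf).2 hnb
    rw [hμv] at hlt
    obtain ⟨hle, hnle⟩ := hlt
    cases hw : ν (R.T.par v) with
    | inl x =>
      rw [hw] at hle hnle
      have hx : x = R.S.root := R.S.eq_root_of_root_anc hle
      apply hnle
      rw [hx]
      exact R.S.anc_refl _
    | inr y =>
      rw [hw] at hle hnle
      have hy : y = R.S.root := R.S.eq_root_of_root_anc hle
      apply hnle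
      rw [hy]
      show R.S.anc (R.S.par R.S.root) R.S.root
      rw [R.S.par_root]
      exact R.S.anc_refl _

lemma no_edge_to_inr_root [Fintype V] {μ : V → W ⊕ W} (hrec : R.IsRecon μ)
    (hO1 : R.O1) (hO2 : R.O2) :
    ∀ a, ¬ A2rel R μ a (Sum.inr R.S.root) := by
  intro a h
  generalize hb : (Sum.inr R.S.root : V ⊕ W) = b at h
  cases h with
  | a1 v hv =>
    by_cases hd : R.IsDupHGT v
    · rw [toA_dup R hd] at hb
      exact Sum.inr_ne_inl hb
    rcases R.spec_or_leaf hd with hs | hl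
    · rw [R.toA_spec hrec hs] at hb
      have h' : R.lca (R.sigmaBar v) = R.S.root := (Sum.inr.inj hb).symm
      apply R.ne_inl_root hrec hv
      rw [R.mu_spec hrec hs, h']
    · rw [R.toA_leaf hrec hl] at hb
      have h' : R.sig v = R.S.root := (Sum.inr.inj hb).symm
      apply R.ne_inl_root hrec hv
      rw [R.mu_leaf hrec hl, h']
  | a2 y hy =>
    exact hy (Sum.inr.inj hb).symm
  | a3 u hu =>
    have hL : R.lca (R.sigmaBar u) = R.S.root := (Sum.inr.inj hb).symm
    obtain ⟨y, hy, huy⟩ := hrec.2.2.1 u hu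
    have := R.recon_above hrec hO1 hO2 u
    rw [huy, hL] at this
    exact hy (R.S.eq_root_of_root_anc this)
  | a4 v hv => exact Sum.inr_ne_inl hb

end ReconSetup

end AuxRecon
section AuxForward

namespace ReconSetup

variable {V W : Type*} (R : ReconSetup V W)

lemma sanc_child {v : V} (hv : v ≠ R.T.root) : R.T.sanc v (R.T.par v) :=
  ⟨R.T.anc_par v, fun h => R.T.par_ne v hv h.symm⟩

lemma forward_acyclic [Fintype V] {μ : V → W ⊕ W} (hrec : R.IsRecon μ)
    (hO1 : R.O1) (hO2 : R.O2)
    {μ'' : V → W ⊕ W} (hrec'' : R.IsRecon μ'') (hTC : R.TimeConsistent μ'') :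
    Acyclic (A2rel R μ) := by
  obtain ⟨τT, τS, hτT, hτS, hC1, hC2⟩ := hTC
  set g : V ⊕ W → ℝ := Sum.elim τT τS with hg
  have hanti : ∀ {a b : W}, R.S.anc a b → τS b ≤ τS a := by
    intro a b h
    rcases eq_or_ne a b with rfl | hne
    · exact le_rfl
    · exact (hτS a b ⟨h, hne⟩).le
  have htoA : ∀ u : V, g (toA R μ u) = τT u := by
    intro u
    by_cases hd : R.IsDupHGT u
    · rw [toA_dup R hd]; rfl
    rcases R.spec_or_leaf hd with hs | hl
    · rw [R.toA_spec hrec hs]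
      have := hC1 u (R.lca (R.sigmaBar u)) (Or.inl hs) (R.mu_spec hrec'' hs)
      exact this.symm
    · rw [R.toA_leaf hrec hl]
      have := hC1 u (R.sig u) (Or.inr hl) (R.mu_leaf hrec'' hl)
      exact this.symm
  have hstep : ∀ a b, A2rel R μ a b → g a < g b := by
    intro a b hab
    cases hab with
    | a1 v hv =>
      rw [htoA, htoA]
      exact hτT v (R.T.par v) (R.sanc_child hv)
    | a2 y hy =>
      exact hτS y (R.S.par y) ⟨R.S.anc_par y, fun h => R.S.par_ne y hy h.symm⟩
    | a3 u hu =>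
      obtain ⟨y, hy, huy⟩ := hrec''.2.2.1 u hu
      have h1 : τT u < τS y := (hC2 u y hu huy).2
      have h2 := R.recon_above hrec'' hO1 hO2 u
      rw [huy] at h2
      exact lt_of_lt_of_le h1 (hanti h2)
    | a4 v hv =>
      -- g (inr z) < g (inl (par v))  i.e.  τS z < τT (par v)
      have hwh : R.t (R.T.par v) = Event.hgt := R.trans_hgt v hv
      have hdw : R.IsDupHGT (R.T.par v) := Or.inr hwh
      obtain ⟨y, hyroot, hwy⟩ := hrec''.2.2.1 _ hdw
      have hC2w := hC2 _ y hdw hwy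
      have hAne := R.sigmaBar_nonempty hO1 hO2 (R.T.par v)
      have hBne := R.sigmaBar_nonempty hO1 hO2 v
      have hABne : (R.sigmaBar (R.T.par v) ∪ R.sigmaBar v).Nonempty :=
        hAne.mono Set.subset_union_left
      set z := R.lca (R.sigmaBar (R.T.par v) ∪ R.sigmaBar v) with hz
      have hLAy : R.S.anc (R.lca (R.sigmaBar (R.T.par v))) y := by
        have := R.recon_above hrec'' hO1 hO2 (R.T.par v)
        rwa [hwy] at this
      have hLAz : R.S.anc (R.lca (R.sigmaBar (R.T.par v))) z :=
        R.lca_min hAne (fun a ha => R.anc_lca hABne (Set.mem_union_left _ ha))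
      have hLBz : R.S.anc (R.lca (R.sigmaBar v)) z :=
        R.lca_min hBne (fun a ha => R.anc_lca hABne (Set.mem_union_right _ ha))
      have hnBy : ¬ R.S.anc (R.lca (R.sigmaBar v)) y := by
        intro hBy
        have hinc := hrec''.2.2.2.1 v hv
        cases hv'' : μ'' v with
        | inl b =>
          have hLBb : R.S.anc (R.lca (R.sigmaBar v)) b := by
            have := R.recon_above hrec'' hO1 hO2 v
            rwa [hv''] at this
          rcases R.S.anc_comparable hLBb hBy with h | h
          · apply hinc.2
            rw [hv'', hwy]
            exact h
          · rcases eq_or_ne y b with rfl | hne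
            · apply hinc.2
              rw [hv'', hwy]
              exact R.S.anc_refl _
            · apply hinc.1
              rw [hv'', hwy]
              exact R.S.anc_par_of_sanc h hne
        | inr y' =>
          have hLBy' : R.S.anc (R.lca (R.sigmaBar v)) y' := by
            have := R.recon_above hrec'' hO1 hO2 v
            rwa [hv''] at this
          rcases R.S.anc_comparable hLBy' hBy with h | h
          · apply hinc.2
            rw [hv'', hwy]
            exact h
          · apply hinc.1
            rw [hv'', hwy]
            exact h
      have hyz : R.S.anc y z ∧ y ≠ z := by
        rcases R.S.anc_comparable hLAy hLAz with h | h
        · refine ⟨h, ?_⟩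
          rintro rfl
          exact hnBy (R.S.anc_trans hLBz (R.S.anc_refl _))
        · exfalso
          exact hnBy (R.S.anc_trans hLBz h)
      have hpyz : R.S.anc (R.S.par y) z := R.S.anc_par_of_sanc hyz.1 hyz.2
      have : τS z ≤ τS (R.S.par y) := hanti hpyz
      show τS z < τT (R.T.par v)
      linarith [hC2w.1]
  have hmono : ∀ {p q : V ⊕ W}, Relation.ReflTransGen (A2rel R μ) p q → g p ≤ g q := by
    intro p q h
    induction h with
    | refl => exact le_rfl
    | @tail b c _ hbc ih => exact le_trans ih (hstep b c hbc).le
  intro x y hxy hrt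
  have := hstep x y hxy
  have := hmono hrt
  linarith

end ReconSetup

end AuxForward
section AuxConstruct

namespace ReconSetup

variable {V W : Type*} (R : ReconSetup V W)

lemma construct_time_consistent [Fintype V] {μ : V → W ⊕ W}
    (hrec : R.IsRecon μ) (hO1 : R.O1) (hO2 : R.O2)
    (g : V ⊕ W → ℝ)
    (hg : ∀ a b, A2rel R μ a b → g a < g b)
    (hginj : ∀ (u : V) (x : W), g (Sum.inl u) ≠ g (Sum.inr x))
    (hgroot : ∀ u : V, g (Sum.inr R.S.root) < g (Sum.inl u)) :
    ∃ μ', R.IsRecon μ' ∧ R.TimeConsistent μ' := by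
  classical
  set τS : W → ℝ := fun x => g (Sum.inr x) with hτSdef
  have hτS_time : R.S.IsTimeMap τS :=
    R.S.isTimeMap_of_edge (fun y hy => hg _ _ (A2rel.a2 y hy))
  have hanti : ∀ {a b : W}, R.S.anc a b → τS b ≤ τS a := by
    intro a b h
    rcases eq_or_ne a b with rfl | hne
    · exact le_rfl
    · exact (hτS_time a b ⟨h, hne⟩).le
  set τT : V → ℝ := fun u => g (toA R μ u) with hτTdef
  have hτT_time : R.T.IsTimeMap τT :=
    R.T.isTimeMap_of_edge (fun v hv => hg _ _ (A2rel.a1 v hv))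
  have hτT_dup : ∀ u, R.IsDupHGT u → τT u = g (Sum.inl u) := by
    intro u hu
    show g (toA R μ u) = _
    rw [toA_dup R hu]
  have hτT_spec : ∀ u, R.t u = Event.spec → τT u = τS (R.lca (R.sigmaBar u)) := by
    intro u hu
    show g (toA R μ u) = _
    rw [R.toA_spec hrec hu]
  have hτT_leaf : ∀ u, R.t u = Event.leaf → τT u = τS (R.sig u) := by
    intro u hu
    show g (toA R μ u) = _
    rw [R.toA_leaf hrec hu]
  -- the switching point
  have hswitch : ∀ u, R.IsDupHGT u → ∃ y : W, R.S.anc (R.lca (R.sigmaBar u)) y ∧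
      y ≠ R.S.root ∧ τS (R.S.par y) < g (Sum.inl u) ∧ g (Sum.inl u) < τS y := by
    intro u hu
    set L := R.lca (R.sigmaBar u) with hL
    set c := g (Sum.inl u) with hc
    have hcL : c < τS L := hg _ _ (A2rel.a3 u hu)
    have hcr : τS R.S.root < c := hgroot u
    have hne : ∀ z : W, τS z ≠ c := fun z h => hginj u z h.symm
    obtain ⟨m, hm⟩ := R.S.reaches L
    have hJ : ∃ j, τS (R.S.par^[j] L) < c := ⟨m, by rw [hm]; exact hcr⟩
    have hjs : τS (R.S.par^[Nat.find hJ] L) < c := Nat.find_spec hJ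
    set j := Nat.find hJ with hjdef
    have hj0 : j ≠ 0 := by
      intro h
      rw [h] at hjs
      simp only [Function.iterate_zero_apply] at hjs
      linarith
    refine ⟨R.S.par^[j-1] L, ⟨j-1, rfl⟩, ?_, ?_, ?_⟩
    · intro hroot
      have h1 : ¬ τS (R.S.par^[j-1] L) < c := Nat.find_min hJ (by omega)
      rw [hroot] at h1
      exact h1 hcr
    · have he : j - 1 + 1 = j := by omega
      have h2 : R.S.par^[j-1+1] L = R.S.par (R.S.par^[j-1] L) := Function.iterate_succ_apply' _ _ _
      rw [he] at h2
      rw [← h2]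
      exact hjs
    · have h1 : ¬ τS (R.S.par^[j-1] L) < c := Nat.find_min hJ (by omega)
      rcases lt_trichotomy c (τS (R.S.par^[j-1] L)) with h | h | h
      · exact h
      · exact absurd h.symm (hne _)
      · exact absurd h h1
  choose Y hY1 hY2 hY3 hY4 using hswitch
  set μ' : V → W ⊕ W := fun u => if h : R.IsDupHGT u then Sum.inr (Y u h) else
      if R.t u = Event.spec then Sum.inl (R.lca (R.sigmaBar u)) else Sum.inl (R.sig u)
    with hμ'def
  have hμ'_dup : ∀ u (h : R.IsDupHGT u), μ' u = Sum.inr (Y u h) := fun u h => dif_pos h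
  have hμ'_spec : ∀ u, R.t u = Event.spec → μ' u = Sum.inl (R.lca (R.sigmaBar u)) := by
    intro u hu
    show (if h : R.IsDupHGT u then _ else _) = _
    rw [dif_neg (R.not_dup_of_spec hu), if_pos hu]
  have hμ'_leaf : ∀ u, R.t u = Event.leaf → μ' u = Sum.inl (R.sig u) := by
    intro u hu
    show (if h : R.IsDupHGT u then _ else _) = _
    rw [dif_neg (R.not_dup_of_leaf hu), if_neg]
    intro hs
    rw [hu] at hs
    exact Event.noConfusion hs
  -- per-vertex image data
  have himg_sl : ∀ x, ¬ R.IsDupHGT x → ∃ b, μ' x = Sum.inl b ∧ τT x = τS b ∧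
      R.S.anc (R.lca (R.sigmaBar x)) b := by
    intro x hx
    rcases R.spec_or_leaf hx with hs | hl
    · exact ⟨_, hμ'_spec x hs, hτT_spec x hs, R.S.anc_refl _⟩
    · refine ⟨_, hμ'_leaf x hl, hτT_leaf x hl, ?_⟩
      have hleaf : R.T.IsLeaf x := (R.leaf_iff x).mpr hl
      rw [R.sigmaBar_leaf hleaf]
      refine R.lca_min (Set.singleton_nonempty _) ?_
      intro a ha
      rw [Set.mem_singleton_iff] at ha
      subst ha
      exact R.S.anc_refl _
  have himg_dup : ∀ x (h : R.IsDupHGT x), ∃ b, μ' x = Sum.inr b ∧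
      τS (R.S.par b) < τT x ∧ τT x < τS b ∧ R.S.anc (R.lca (R.sigmaBar x)) b ∧
      b ≠ R.S.root := by
    intro x h
    refine ⟨Y x h, hμ'_dup x h, ?_, ?_, hY1 x h, hY2 x h⟩
    · rw [hτT_dup x h]; exact hY3 x h
    · rw [hτT_dup x h]; exact hY4 x h
  -- the per-edge monotonicity lemma
  have hedge : ∀ v, v ≠ R.T.root → v ∉ R.trans →
      R.extLE (μ' v) (μ' (R.T.par v)) ∧
      (¬ (R.IsDupHGT v ∧ R.IsDupHGT (R.T.par v)) → R.extLT (μ' v) (μ' (R.T.par v))) := by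
    intro v hv htr
    have hτ : τT (R.T.par v) < τT v := hτT_time v (R.T.par v) (R.sanc_child hv)
    have hBne := R.sigmaBar_nonempty hO1 hO2 v
    have hLvLu : R.S.anc (R.lca (R.sigmaBar v)) (R.lca (R.sigmaBar (R.T.par v))) := by
      apply R.lca_min hBne
      intro a ha
      exact R.anc_lca (R.sigmaBar_nonempty hO1 hO2 _) (R.sigmaBar_subset htr ha)
    by_cases hdv : R.IsDupHGT v <;> by_cases hdu : R.IsDupHGT (R.T.par v)
    · -- both dup
      obtain ⟨bv, hbv, hv1, hv2, hvL, -⟩ := himg_dup v hdv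
      obtain ⟨bu, hbu, hu1, hu2, huL, -⟩ := himg_dup _ hdu
      have hcomp := R.S.anc_comparable hvL (R.S.anc_trans hLvLu huL)
      refine ⟨?_, fun h => absurd ⟨hdv, hdu⟩ h⟩
      rw [hbv, hbu]
      show R.S.anc bv bu
      rcases hcomp with h | h
      · exact h
      · rcases eq_or_ne bu bv with rfl | hne
        · exact R.S.anc_refl _
        · exfalso
          have := hanti (R.S.anc_par_of_sanc h hne)
          have := hanti (R.S.anc_par bu)
          linarith
    · -- v dup, u spec/leaf
      obtain ⟨bv, hbv, hv1, hv2, hvL, -⟩ := himg_dup v hdv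
      obtain ⟨bu, hbu, hu1, huL⟩ := himg_sl _ hdu
      have hcomp := R.S.anc_comparable hvL (R.S.anc_trans hLvLu huL)
      have hlt : τS bu < τS bv := by linarith
      have hne : bv ≠ bu := fun h => by rw [h] at hlt; linarith
      have hanc : R.S.anc bv bu := by
        rcases hcomp with h | h
        · exact h
        · exfalso
          have := hanti h
          linarith
      constructor
      · rw [hbv, hbu]
        show R.S.anc (R.S.par bv) bu
        exact R.S.anc_par_of_sanc hanc hne
      · intro _h
        rw [hbv, hbu]
        refine ⟨R.S.anc_par_of_sanc hanc hne, ?_⟩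
        show ¬ R.S.anc bu bv
        intro h
        have := hanti h
        linarith
    · -- v spec/leaf, u dup
      obtain ⟨bv, hbv, hv1, hvL⟩ := himg_sl v hdv
      obtain ⟨bu, hbu, hu1, hu2, huL, -⟩ := himg_dup _ hdu
      have hcomp := R.S.anc_comparable hvL (R.S.anc_trans hLvLu huL)
      have hanc : R.S.anc bv bu := by
        rcases hcomp with h | h
        · exact h
        · rcases eq_or_ne bu bv with rfl | hne
          · exact R.S.anc_refl _
          · exfalso
            have := hanti (R.S.anc_par_of_sanc h hne)
            linarith
      constructor
      · rw [hbv, hbu]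
        exact hanc
      · intro _h
        rw [hbv, hbu]
        refine ⟨hanc, ?_⟩
        show ¬ R.S.anc (R.S.par bu) bv
        intro h
        have := hanti h
        linarith
    · -- both spec/leaf
      obtain ⟨bv, hbv, hv1, hvL⟩ := himg_sl v hdv
      obtain ⟨bu, hbu, hu1, huL⟩ := himg_sl _ hdu
      have hcomp := R.S.anc_comparable hvL (R.S.anc_trans hLvLu huL)
      have hlt : τS bu < τS bv := by linarith
      have hanc : R.S.anc bv bu := by
        rcases hcomp with h | h
        · exact h
        · exfalso
          have := hanti h
          linarith
      constructor
      · rw [hbv, hbu]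
        exact hanc
      · intro _h
        rw [hbv, hbu]
        refine ⟨hanc, ?_⟩
        show ¬ R.S.anc bu bv
        intro h
        have := hanti h
        linarith
  -- M3
  have hM3' : R.M3 μ' := by
    intro v w hsf
    obtain ⟨⟨k0, hk0, hmem0⟩, hvw⟩ := hsf
    have hex : ∃ k, R.T.par^[k] v = w := ⟨k0, hk0⟩
    have hks : R.T.par^[Nat.find hex] v = w := Nat.find_spec hex
    set k := Nat.find hex with hkdef
    have hkle : k ≤ k0 := Nat.find_min' hex hk0
    have hkmem : ∀ i, i < k → R.T.par^[i] v ∉ R.trans := fun i hi => hmem0 i (by omega)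
    have hknr : ∀ i, i < k → R.T.par^[i] v ≠ R.T.root := by
      intro i hi hroot
      have hw : R.T.par^[k] v = R.T.root := by
        have h2 : R.T.par^[k - i + i] v = R.T.par^[k-i] (R.T.par^[i] v) :=
          Function.iterate_add_apply _ _ _ _
        rw [Nat.sub_add_cancel hi.le, hroot, Function.iterate_fixed R.T.par_root] at h2
        exact h2
      exact Nat.find_min hex hi (by rw [hroot, ← hw, hks])
    have hk0' : k ≠ 0 := by
      intro h
      rw [h] at hks
      exact hvw hks
    have hchain : ∀ j, j ≤ k → ∀ i, i ≤ j → R.extLE (μ' (R.T.par^[i] v)) (μ' (R.T.par^[j] v)) := by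
      intro j
      induction j with
      | zero =>
        intro _ i hi
        have : i = 0 := by omega
        subst this
        exact R.extLE_refl _
      | succ j ih =>
        intro hj i hi
        have hstep : R.extLE (μ' (R.T.par^[j] v)) (μ' (R.T.par^[j+1] v)) := by
          rw [Function.iterate_succ_apply']
          exact (hedge (R.T.par^[j] v) (hknr j (by omega)) (hkmem j (by omega))).1
        rcases eq_or_lt_of_le hi with rfl | hij
        · exact R.extLE_refl _
        · exact R.extLE_trans (ih (by omega) i (by omega)) hstep
    have hLE : R.extLE (μ' v) (μ' w) := by
      have := hchain k le_rfl 0 (by omega)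
      rwa [Function.iterate_zero_apply, hks] at this
    refine ⟨fun _ => hLE, ?_⟩
    intro hnb
    by_cases hdv : R.IsDupHGT v
    · -- last edge strict
      have hdw : ¬ R.IsDupHGT w := fun h => hnb ⟨hdv, h⟩
      have hlast : R.extLT (μ' (R.T.par^[k-1] v)) (μ' w) := by
        have hpar : R.T.par (R.T.par^[k-1] v) = w := by
          have he : k - 1 + 1 = k := by omega
          have h2 : R.T.par^[k-1+1] v = R.T.par (R.T.par^[k-1] v) := Function.iterate_succ_apply' _ _ _
          rw [he] at h2
          rw [← h2]
          exact hks
        have := (hedge (R.T.par^[k-1] v) (hknr (k-1) (by omega)) (hkmem (k-1) (by omega))).2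
        rw [hpar] at this
        exact this (fun h => hdw h.2)
      have hfirst : R.extLE (μ' v) (μ' (R.T.par^[k-1] v)) := by
        have := hchain (k-1) (by omega) 0 (by omega)
        rwa [Function.iterate_zero_apply] at this
      exact R.extLT_of_le_lt hfirst hlast
    · -- first edge strict
      have hfirst : R.extLT (μ' v) (μ' (R.T.par v)) :=
        (hedge v (hknr 0 (by omega)) (hkmem 0 (by omega))).2 (fun h => hdv h.1)
      have hrest : R.extLE (μ' (R.T.par v)) (μ' w) := by
        have := hchain k le_rfl 1 (by omega)
        rw [hks] at this
        simpa using this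
      exact R.extLT_of_lt_le hfirst hrest
  -- M2iii
  have hM2iii' : R.M2iii μ' := by
    intro v htr
    have hvroot : v ≠ R.T.root := R.trans_ne_root v htr
    have hwh : R.t (R.T.par v) = Event.hgt := R.trans_hgt v htr
    have hdw : R.IsDupHGT (R.T.par v) := Or.inr hwh
    obtain ⟨y, hwImg, hy1, hy2, hyL, hyroot⟩ := himg_dup _ hdw
    have hτwv : τT (R.T.par v) < τT v := hτT_time v (R.T.par v) (R.sanc_child hvroot)
    have hAne := R.sigmaBar_nonempty hO1 hO2 (R.T.par v)
    have hBne := R.sigmaBar_nonempty hO1 hO2 v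
    have hABne : (R.sigmaBar (R.T.par v) ∪ R.sigmaBar v).Nonempty :=
      hAne.mono Set.subset_union_left
    set z := R.lca (R.sigmaBar (R.T.par v) ∪ R.sigmaBar v) with hz
    have hτz : τS z < τT (R.T.par v) := by
      have := hg _ _ (A2rel.a4 v htr)
      rw [hτT_dup _ hdw]
      exact this
    have hub : ∀ b : W, R.S.anc y b → R.S.anc (R.lca (R.sigmaBar v)) b →
        τS b ≤ τS z := by
      intro b h1 h2
      apply hanti
      apply R.lca_min hABne
      rintro s (hs | hs)
      · exact R.S.anc_trans (R.S.anc_trans (R.anc_lca hAne hs) hyL) h1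
      · exact R.S.anc_trans (R.S.anc_trans (R.anc_lca hBne hs) h2) (R.S.anc_refl _)
    constructor
    · -- ¬ extLE (μ' (par v)) (μ' v)
      intro hle
      rw [hwImg] at hle
      by_cases hdv : R.IsDupHGT v
      · obtain ⟨y', hvImg, hv1, hv2, hvL, -⟩ := himg_dup v hdv
        rw [hvImg] at hle
        -- hle : anc y y'
        have h1 : τS y' ≤ τS z := by
          apply hanti
          apply R.lca_min hABne
          rintro s (hs | hs)
          · exact R.S.anc_trans (R.S.anc_trans (R.anc_lca hAne hs) hyL) hle
          · exact R.S.anc_trans (R.anc_lca hBne hs) hvL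
        linarith
      · obtain ⟨b, hvImg, hv1, hvL⟩ := himg_sl v hdv
        rw [hvImg] at hle
        -- hle : anc (par y) b
        have h1 : τS b ≤ τS z := by
          apply hanti
          apply R.lca_min hABne
          rintro s (hs | hs)
          · exact R.S.anc_trans (R.anc_lca hAne hs)
              (R.S.anc_trans hyL (R.S.anc_trans (R.S.anc_par y) hle))
          · exact R.S.anc_trans (R.anc_lca hBne hs) hvL
        linarith
    · -- ¬ extLE (μ' v) (μ' (par v))
      intro hle
      rw [hwImg] at hle
      have hBy : R.S.anc (R.lca (R.sigmaBar v)) y := by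
        by_cases hdv : R.IsDupHGT v
        · obtain ⟨y', hvImg, -, -, hvL, -⟩ := himg_dup v hdv
          rw [hvImg] at hle
          exact R.S.anc_trans hvL hle
        · obtain ⟨b, hvImg, -, hvL⟩ := himg_sl v hdv
          rw [hvImg] at hle
          exact R.S.anc_trans hvL hle
      have h1 : τS y ≤ τS z := by
        apply hanti
        apply R.lca_min hABne
        rintro s (hs | hs)
        · exact R.S.anc_trans (R.anc_lca hAne hs) hyL
        · exact R.S.anc_trans (R.anc_lca hBne hs) hBy
      linarith
  -- assemble
  refine ⟨μ', ⟨?_, ?_, ?_, hM2iii', hM3'⟩, τT, τS, hτT_time, hτS_time, ?_, ?_⟩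
  · intro u hu
    exact hμ'_leaf u ((R.leaf_iff u).mp hu)
  · intro u hu
    exact hμ'_spec u hu
  · intro u hu
    exact ⟨Y u hu, hY2 u hu, hμ'_dup u hu⟩
  · -- C1
    intro u x hu hux
    have hnd : ¬ R.IsDupHGT u := by
      rcases hu with h | h
      · exact R.not_dup_of_spec h
      · exact R.not_dup_of_leaf h
    obtain ⟨b, himg, ht, -⟩ := himg_sl u hnd
    rw [himg] at hux
    rw [Sum.inl.inj hux] at ht
    exact ht
  · -- C2
    intro u y hu huy
    obtain ⟨b, himg, h1, h2, -, -⟩ := himg_dup u hu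
    rw [himg] at huy
    rw [← Sum.inr.inj huy]
    exact ⟨h1, h2⟩

end ReconSetup

end AuxConstruct
/-- given a reconciliation map `μ` from `(T;t,σ)` to `S`, there
exists a time-consistent reconciliation map from `(T;t,σ)` to `S` iff the
auxiliary graph `A₂` is acyclic. -/
theorem stmt14 {V W : Type*} [Fintype V] [Fintype W]
    (R : ReconSetup V W) (μ : V → W ⊕ W) (hrec : R.IsRecon μ)
    (hO1 : R.O1) (hO2 : R.O2) (hS1 : R.Sigma1) (hS2 : R.Sigma2) :
    (∃ μ', R.IsRecon μ' ∧ R.TimeConsistent μ') ↔ Acyclic (A2rel R μ) := by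
  constructor
  · rintro ⟨μ'', hrec'', hTC⟩
    exact R.forward_acyclic hrec hO1 hO2 hrec'' hTC
  · intro hacyc
    classical
    set r := A2rel R μ with hr
    have hirr : ∀ a, ¬ Relation.TransGen r a a := by
      intro a ha
      obtain ⟨c, h1, h2⟩ := Relation.TransGen.head'_iff.mp ha
      exact hacyc a c h1 h2
    set rk : V ⊕ W → ℕ := fun a =>
      (Finset.univ.filter (fun b => Relation.TransGen r b a)).card with hrk
    have hrkmono : ∀ a b, r a b → rk a < rk b := by
      intro a b hab
      apply Finset.card_lt_card
      rw [Finset.ssubset_iff_of_subset]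
      · refine ⟨a, ?_, ?_⟩
        · simp only [Finset.mem_filter, Finset.mem_univ, true_and]
          exact Relation.TransGen.single hab
        · simp only [Finset.mem_filter, Finset.mem_univ, true_and]
          exact hirr a
      · intro c hc
        simp only [Finset.mem_filter, Finset.mem_univ, true_and] at hc ⊢
        exact hc.tail hab
    set N : ℕ := Fintype.card (V ⊕ W) + 1 with hN
    set idx : V ⊕ W → ℕ := fun a => ((Fintype.equivFin (V ⊕ W)) a).val with hidx
    have hidxlt : ∀ a, idx a < N := by
      intro a
      simp only [hidx, hN]
      have := ((Fintype.equivFin (V ⊕ W)) a).isLt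
      omega
    set f : V ⊕ W → ℕ := fun a => rk a * N + idx a with hf
    have hfmono : ∀ a b, rk a < rk b → f a < f b := by
      intro a b h
      have h1 : idx a < N := hidxlt a
      have h2 : (rk a + 1) * N ≤ rk b * N := Nat.mul_le_mul_right N (by omega)
      show rk a * N + idx a < rk b * N + idx b
      nlinarith
    have hfedge : ∀ a b, r a b → f a < f b := fun a b hab => hfmono a b (hrkmono a b hab)
    have hfinj : Function.Injective f := by
      intro a b hab
      rcases lt_trichotomy (rk a) (rk b) with h | h | h
      · exact absurd hab (Nat.ne_of_lt (hfmono a b h))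
      · have hab' : rk a * N + idx a = rk b * N + idx b := hab
        rw [h] at hab'
        have : idx a = idx b := by omega
        have : (Fintype.equivFin (V ⊕ W)) a = (Fintype.equivFin (V ⊕ W)) b := Fin.ext this
        exact (Fintype.equivFin (V ⊕ W)).injective this
      · exact absurd hab.symm (Nat.ne_of_lt (hfmono b a h))
    set g : V ⊕ W → ℝ := fun a => if a = Sum.inr R.S.root then -1 else (f a : ℝ) with hgdef
    have hnoroot := R.no_edge_to_inr_root hrec hO1 hO2
    have hg : ∀ a b, r a b → g a < g b := by
      intro a b hab
      have hbne : b ≠ Sum.inr R.S.root := by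
        rintro rfl
        exact hnoroot a hab
      show (if a = Sum.inr R.S.root then (-1:ℝ) else (f a : ℝ)) <
        (if b = Sum.inr R.S.root then (-1:ℝ) else (f b : ℝ))
      rw [if_neg hbne]
      by_cases ha : a = Sum.inr R.S.root
      · rw [if_pos ha]
        have : (0:ℝ) ≤ (f b : ℝ) := Nat.cast_nonneg _
        linarith
      · rw [if_neg ha]
        exact_mod_cast hfedge a b hab
    have hginj : ∀ (u : V) (x : W), g (Sum.inl u) ≠ g (Sum.inr x) := by
      intro u x h
      have hune : (Sum.inl u : V ⊕ W) ≠ Sum.inr R.S.root := Sum.inl_ne_inr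
      by_cases hx : (Sum.inr x : V ⊕ W) = Sum.inr R.S.root
      · simp only [hgdef, if_neg hune, if_pos hx] at h
        have : (0:ℝ) ≤ (f (Sum.inl u) : ℝ) := Nat.cast_nonneg _
        linarith
      · simp only [hgdef, if_neg hune, if_neg hx] at h
        have : f (Sum.inl u : V ⊕ W) = f (Sum.inr x) := by exact_mod_cast h
        exact Sum.inl_ne_inr (hfinj this)
    have hgroot : ∀ u : V, g (Sum.inr R.S.root) < g (Sum.inl u) := by
      intro u
      have hune : (Sum.inl u : V ⊕ W) ≠ Sum.inr R.S.root := Sum.inl_ne_inr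
      simp only [hgdef, if_pos rfl, if_neg hune]
      have : (0:ℝ) ≤ (f (Sum.inl u) : ℝ) := Nat.cast_nonneg _
      linarith
    exact R.construct_time_consistent hrec hO1 hO2 g hg hginj hgroot
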